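/- arXiv:1711.06455 — 2 statements merged into one kernel-verified Lean document; each statement's English description precedes it below -/
import Mathlib

section
/- (Sherman–Morrison contraction update for Laplacians) Let G be a connected weighted graph, s,t vertices, f = {u,v} an edge with lev_G(f) > 0, and d any vector orthogonal to the all-ones vector. Then the potential differences in the contracted graph satisfy b_{st}^T L_{G/f}^+ d = b_{st}^T L_G^+ d - (b_{st}^T L_G^+ b_f)(b_f^T L_G^+ d) / (r_f * lev_G(f)), where on the left-hand side b_{st} and d are interpreted in G/f by merging the coordinates of u and v. -/
open Matrix

/-- The signed indicator vector `χ_x - χ_y`. -/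
def incv {V : Type*} [DecidableEq V] (x y : V) : V → ℝ := fun v =>
  (if v = x then 1 else 0) - (if v = y then 1 else 0)

/-- Weighted Laplacian of the multigraph whose edge `e` has endpoints `a e`, `b e`
and conductance `c e`. -/
noncomputable def lapM {V E : Type*} [DecidableEq V] [Fintype E]
    (a b : E → V) (c : E → ℝ) : Matrix V V ℝ :=
  ∑ e, c e • Matrix.vecMulVec (incv (a e) (b e)) (incv (a e) (b e))

/-- `M` is the Moore–Penrose pseudoinverse of `L`. -/
def IsMPInv {V : Type*} [Fintype V] (L M : Matrix V V ℝ) : Prop :=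
  L * M * L = L ∧ M * L * M = M ∧ (L * M)ᵀ = L * M ∧ (M * L)ᵀ = M * L

/-- Connectivity of a weighted graph, encoded as: the kernel of its Laplacian
consists exactly of the constant vectors. -/
def LapConnected {V : Type*} [Fintype V] (L : Matrix V V ℝ) : Prop :=
  ∀ x : V → ℝ, L.mulVec x = 0 → ∃ t : ℝ, ∀ v, x v = t

section helpers
variable {V W E : Type*} [Fintype V] [DecidableEq V] [Fintype W] [DecidableEq W] [Fintype E]

lemma incv_dot (x y : V) (z : V → ℝ) : incv x y ⬝ᵥ z = z x - z y := by
  simp [incv, dotProduct, sub_mul, Finset.sum_sub_distrib, ite_mul]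

lemma incv_self (x : V) : incv x x = 0 := by funext v; simp [incv]

lemma sum_incv (x y : V) : ∑ v, incv x y v = 0 := by
  simp [incv, Finset.sum_sub_distrib]

lemma lapM_mulVec (a b : E → V) (c : E → ℝ) (x : V → ℝ) :
    (lapM a b c).mulVec x = ∑ e, (c e * (incv (a e) (b e) ⬝ᵥ x)) • incv (a e) (b e) := by
  funext v
  simp only [lapM, mulVec, dotProduct, Finset.sum_apply, Matrix.sum_apply, Matrix.smul_apply,
    vecMulVec_apply, Pi.smul_apply, smul_eq_mul]
  simp_rw [Finset.sum_mul]
  rw [Finset.sum_comm]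
  congr 1; funext e
  rw [Finset.mul_sum, Finset.sum_mul]
  congr 1; funext u; ring

lemma lapM_transpose (a b : E → V) (c : E → ℝ) : (lapM a b c)ᵀ = lapM a b c := by
  funext i j
  simp only [lapM, transpose_apply, Matrix.sum_apply, Matrix.smul_apply, vecMulVec_apply, smul_eq_mul]
  congr 1; funext e; ring

lemma sum_lapM_mulVec (a b : E → V) (c : E → ℝ) (x : V → ℝ) :
    ∑ v, (lapM a b c).mulVec x v = 0 := by
  rw [lapM_mulVec]
  simp only [Finset.sum_apply, Pi.smul_apply, smul_eq_mul]
  rw [Finset.sum_comm]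
  apply Finset.sum_eq_zero; intro e _
  rw [← Finset.mul_sum, sum_incv, mul_zero]

lemma dotProduct_sum_smul (x : V → ℝ) (k : E → ℝ) (u : E → V → ℝ) :
    x ⬝ᵥ (∑ e, k e • u e) = ∑ e, k e * (u e ⬝ᵥ x) := by
  simp only [dotProduct, Finset.sum_apply, Pi.smul_apply, smul_eq_mul]
  simp_rw [Finset.mul_sum]
  rw [Finset.sum_comm]
  congr 1; funext e
  exact Finset.sum_congr rfl fun v _ => by ring

lemma lapM_quad (a b : E → V) (c : E → ℝ) (x : V → ℝ) :
    x ⬝ᵥ (lapM a b c).mulVec x = ∑ e, c e * (incv (a e) (b e) ⬝ᵥ x) ^ 2 := by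
  rw [lapM_mulVec, dotProduct_sum_smul]
  congr 1; funext e
  rw [sq]; ring

variable {π : V → W}

/-- merge a vector along `π` -/
def Pvec (π : V → W) (x : V → ℝ) : W → ℝ := fun w => ∑ v, if π v = w then x v else 0

lemma Pvec_incv (x y : V) : Pvec π (incv x y) = incv (π x) (π y) := by
  funext w
  simp only [Pvec, incv]
  have : ∀ v : V, (if π v = w then (if v = x then (1:ℝ) else 0) - (if v = y then 1 else 0) else 0)
      = (if v = x then (if π v = w then (1:ℝ) else 0) else 0)
        - (if v = y then (if π v = w then (1:ℝ) else 0) else 0) := by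
    intro v; split_ifs <;> simp
  rw [Finset.sum_congr rfl fun v _ => this v, Finset.sum_sub_distrib]
  simp [eq_comm]

lemma Pvec_sub (x y : V → ℝ) : Pvec π (fun v => x v - y v) = fun w => Pvec π x w - Pvec π y w := by
  funext w
  simp only [Pvec]
  rw [← Finset.sum_sub_distrib]
  exact Finset.sum_congr rfl fun v _ => by split_ifs <;> simp

lemma Pvec_sum (g : E → V → ℝ) : Pvec π (∑ e, g e) = ∑ e, Pvec π (g e) := by
  funext w
  simp only [Pvec, Finset.sum_apply]
  rw [Finset.sum_comm]
  exact Finset.sum_congr rfl fun v _ => by split_ifs <;> simp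

lemma Pvec_smul (k : ℝ) (x : V → ℝ) : Pvec π (k • x) = k • Pvec π x := by
  funext w
  simp only [Pvec, Pi.smul_apply, smul_eq_mul, Finset.mul_sum]
  exact Finset.sum_congr rfl fun v _ => by split_ifs <;> simp

lemma incv_comp_dot (x y : V) (g : W → ℝ) :
    incv (π x) (π y) ⬝ᵥ g = incv x y ⬝ᵥ (fun v => g (π v)) := by
  rw [incv_dot, incv_dot]

/-- projection property of the Moore–Penrose pseudoinverse of a connected Laplacian -/
lemma mp_proj [Nonempty V] {L M : Matrix V V ℝ}
    (hLt : Lᵀ = L) (hsum : ∀ x : V → ℝ, ∑ v, L.mulVec x v = 0)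
    (h1 : L * M * L = L) (h3 : (L * M)ᵀ = L * M)
    (hconn : ∀ x : V → ℝ, L.mulVec x = 0 → ∃ t : ℝ, ∀ v, x v = t)
    (y : V → ℝ) (hy : ∑ v, y v = 0) : L.mulVec (M.mulVec y) = y := by
  have hkey : L * (1 - L * M) = 0 := by
    have h2 : (1 - L * M) * L = 0 := by
      rw [sub_mul, one_mul, h1, sub_self]
    have := congrArg Matrix.transpose h2
    rwa [Matrix.transpose_mul, Matrix.transpose_sub, Matrix.transpose_one, h3, hLt,
      Matrix.transpose_zero] at this
  set z : V → ℝ := y - L.mulVec (M.mulVec y) with hz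
  have hzL : L.mulVec z = 0 := by
    have : z = (1 - L * M).mulVec y := by
      rw [Matrix.sub_mulVec, Matrix.one_mulVec, hz, Matrix.mulVec_mulVec]
    rw [this, Matrix.mulVec_mulVec, hkey, Matrix.zero_mulVec]
  obtain ⟨t, ht⟩ := hconn z hzL
  have hsz : ∑ v, z v = 0 := by
    simp only [hz, Pi.sub_apply, Finset.sum_sub_distrib, hy, hsum, sub_zero]
  have ht0 : t = 0 := by
    rw [Finset.sum_congr rfl fun v _ => ht v, Finset.sum_const] at hsz
    have hcard : (Fintype.card V : ℝ) ≠ 0 := by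
      exact_mod_cast Fintype.card_ne_zero
    simpa [nsmul_eq_mul, hcard] using hsz
  funext v
  have := ht v
  rw [ht0] at this
  have : y v - L.mulVec (M.mulVec y) v = 0 := this
  linarith
end helpers

/-- **Sherman–Morrison contraction update for Laplacians.**  The contracted
graph `G/f` is presented through a surjection `π : V → W` identifying exactly
the endpoints of `f`; vectors are transported to `G/f` by merging the
coordinates of the two endpoints. -/
theorem sherman_morrison_contraction_update
    {V W E : Type*} [Fintype V] [DecidableEq V] [Fintype W] [DecidableEq W]
    [Fintype E] [DecidableEq E]
    (a b : E → V) (r : E → ℝ) (hr : ∀ e, 0 < r e)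
    (hconn : LapConnected (lapM a b fun e => (r e)⁻¹))
    (s t : V) (f : E) (d : V → ℝ) (hd : ∑ v, d v = 0)
    (π : V → W) (hπsurj : Function.Surjective π)
    (hπ : ∀ x y : V, π x = π y ↔ (x = y ∨ (x = a f ∧ y = b f) ∨ (x = b f ∧ y = a f)))
    (Lp : Matrix V V ℝ) (hLp : IsMPInv (lapM a b fun e => (r e)⁻¹) Lp)
    (LpW : Matrix W W ℝ)
    (hLpW : IsMPInv (lapM (fun e => π (a e)) (fun e => π (b e))
        (fun e => if e = f then 0 else (r e)⁻¹)) LpW)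
    (hf : 0 < (incv (a f) (b f) ⬝ᵥ Lp.mulVec (incv (a f) (b f))) / r f) :
    incv (π s) (π t) ⬝ᵥ LpW.mulVec (fun w => ∑ v, if π v = w then d v else 0)
      = incv s t ⬝ᵥ Lp.mulVec d
        - (incv s t ⬝ᵥ Lp.mulVec (incv (a f) (b f)))
            * (incv (a f) (b f) ⬝ᵥ Lp.mulVec d)
            / (r f * ((incv (a f) (b f) ⬝ᵥ Lp.mulVec (incv (a f) (b f))) / r f)) := by
  classical
  have : Nonempty V := ⟨a f⟩
  set c : E → ℝ := fun e => (r e)⁻¹ with hc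
  set c' : E → ℝ := fun e => if e = f then 0 else (r e)⁻¹ with hc'
  set L : Matrix V V ℝ := lapM a b c with hLdef
  set LW : Matrix W W ℝ := lapM (fun e => π (a e)) (fun e => π (b e)) c' with hLWdef
  set bf : V → ℝ := incv (a f) (b f) with hbf
  set β : ℝ := bf ⬝ᵥ Lp.mulVec bf with hβdef
  set γ : ℝ := bf ⬝ᵥ Lp.mulVec d with hγdef
  have hrf : r f ≠ 0 := (hr f).ne'
  have hβpos : 0 < β := by
    have h := mul_pos hf (hr f)
    rwa [div_mul_cancel₀ _ hrf] at h
  have hβ : β ≠ 0 := hβpos.ne'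
  have hπf : π (a f) = π (b f) := (hπ _ _).2 (Or.inr (Or.inl ⟨rfl, rfl⟩))
  -- the candidate potential on V
  set ψ : V → ℝ := fun v => Lp.mulVec d v - (γ / β) * Lp.mulVec bf v with hψdef
  -- projection facts
  have hproj : ∀ y : V → ℝ, (∑ v, y v) = 0 → L.mulVec (Lp.mulVec y) = y := by
    intro y hy
    exact mp_proj (lapM_transpose a b c) (sum_lapM_mulVec a b c) hLp.1 hLp.2.2.1 hconn y hy
  have hLψ : L.mulVec ψ = fun v => d v - (γ / β) * bf v := by
    have h1 : L.mulVec (Lp.mulVec d) = d := hproj d hd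
    have h2 : L.mulVec (Lp.mulVec bf) = bf := hproj bf (sum_incv _ _)
    have : ψ = Lp.mulVec d - (γ / β) • Lp.mulVec bf := by
      funext v; simp [hψdef, Pi.smul_apply, smul_eq_mul]
    rw [this, Matrix.mulVec_sub, Matrix.mulVec_smul, h1, h2]
    funext v; simp [Pi.smul_apply, smul_eq_mul]
  -- ψ descends to W
  have hfib : ∀ v v', π v = π v' → ψ v = ψ v' := by
    have hdot : bf ⬝ᵥ ψ = 0 := by
      have : ψ = Lp.mulVec d - (γ / β) • Lp.mulVec bf := by
        funext v; simp [hψdef, Pi.smul_apply, smul_eq_mul]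
      rw [this, dotProduct_sub, dotProduct_smul, ← hγdef, ← hβdef, smul_eq_mul,
        div_mul_cancel₀ _ hβ, sub_self]
    have hab : ψ (a f) = ψ (b f) := by
      rw [incv_dot] at hdot
      linarith
    intro v v' h
    rcases (hπ v v').1 h with h | ⟨h1, h2⟩ | ⟨h1, h2⟩
    · rw [h]
    · rw [h1, h2]; exact hab
    · rw [h1, h2]; exact hab.symm
  set φt : W → ℝ := fun w => ψ (Function.surjInv hπsurj w) with hφt
  have hcomp : ∀ v, φt (π v) = ψ v := by
    intro v
    exact hfib _ _ (Function.surjInv_eq hπsurj (π v))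
  -- LW φt = Pvec π d
  have hLWφt : LW.mulVec φt = Pvec π d := by
    have key : LW.mulVec φt = Pvec π (L.mulVec ψ) := by
      rw [lapM_mulVec, lapM_mulVec, Pvec_sum]
      congr 1; funext e
      rw [Pvec_smul, Pvec_incv]
      by_cases he : e = f
      · subst he
        rw [hπf, incv_self]
        simp
      · have hce : c' e = c e := by simp [hc', hc, he]
        rw [hce, incv_comp_dot]
        have hfn : (fun v => φt (π v)) = ψ := funext fun v => hcomp v
        rw [hfn]
    rw [key, hLψ]
    have : (fun v => d v - (γ / β) * bf v) = (fun v => d v - ((γ / β) • bf) v) := by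
      funext v; simp
    rw [this, Pvec_sub, Pvec_smul, Pvec_incv, hπf, incv_self]
    funext w; simp
  -- LpW solves the system up to a constant
  have hsolve : LW.mulVec (LpW.mulVec (Pvec π d)) = Pvec π d := by
    conv_lhs => rw [← hLWφt]
    rw [Matrix.mulVec_mulVec, Matrix.mulVec_mulVec, hLpW.1]
    exact hLWφt
  set x : W → ℝ := fun w => LpW.mulVec (Pvec π d) w - φt w with hx
  have hx0 : LW.mulVec x = 0 := by
    have : x = LpW.mulVec (Pvec π d) - φt := rfl
    rw [this, Matrix.mulVec_sub, hsolve, hLWφt, sub_self]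
  -- kernel argument
  have hdots : ∀ e, incv (π (a e)) (π (b e)) ⬝ᵥ x = 0 := by
    have hquad : (0:ℝ) = ∑ e, c' e * (incv (π (a e)) (π (b e)) ⬝ᵥ x) ^ 2 := by
      rw [← lapM_quad, ← hLWdef, hx0]
      simp
    have hterm : ∀ e ∈ Finset.univ, c' e * (incv (π (a e)) (π (b e)) ⬝ᵥ x) ^ 2 = 0 := by
      rw [← Finset.sum_eq_zero_iff_of_nonneg]
      · exact hquad.symm
      · intro e _
        apply mul_nonneg _ (sq_nonneg _)
        by_cases he : e = f <;> simp [hc', he, le_of_lt (hr e), inv_nonneg]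
    intro e
    by_cases he : e = f
    · subst he
      rw [hπf, incv_self]
      simp
    · have hce : c' e = (r e)⁻¹ := by simp [hc', he]
      have := hterm e (Finset.mem_univ e)
      rw [hce, mul_eq_zero] at this
      rcases this with h | h
      · exact absurd h (inv_ne_zero (hr e).ne')
      · exact pow_eq_zero_iff (n := 2) (by norm_num) |>.1 h
  have hLker : L.mulVec (fun v => x (π v)) = 0 := by
    rw [lapM_mulVec]
    apply Finset.sum_eq_zero
    intro e _
    rw [← incv_comp_dot, hdots e]
    simp
  obtain ⟨t0, ht0⟩ := hconn _ hLker
  have hxc : ∀ w, x w = t0 := by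
    intro w
    obtain ⟨v, rfl⟩ := hπsurj w
    exact ht0 v
  -- conclude
  have hPd : (fun w => ∑ v, if π v = w then d v else 0) = Pvec π d := rfl
  rw [hPd, incv_dot]
  have hs' : LpW.mulVec (Pvec π d) (π s) = φt (π s) + t0 := by
    have := hxc (π s); simp only [hx] at this; linarith
  have ht' : LpW.mulVec (Pvec π d) (π t) = φt (π t) + t0 := by
    have := hxc (π t); simp only [hx] at this; linarith
  rw [hs', ht', hcomp s, hcomp t]
  have hgoal : ψ s - ψ t = incv s t ⬝ᵥ ψ := (incv_dot s t ψ).symm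
  have hψdot : incv s t ⬝ᵥ ψ
      = incv s t ⬝ᵥ Lp.mulVec d - (γ / β) * (incv s t ⬝ᵥ Lp.mulVec bf) := by
    have : ψ = Lp.mulVec d - (γ / β) • Lp.mulVec bf := by
      funext v; simp [hψdef, Pi.smul_apply, smul_eq_mul]
    rw [this, dotProduct_sub, dotProduct_smul, smul_eq_mul]
  have hden : r f * (β / r f) = β := by field_simp
  calc ψ s + t0 - (ψ t + t0) = ψ s - ψ t := by ring
    _ = incv s t ⬝ᵥ ψ := hgoal
    _ = incv s t ⬝ᵥ Lp.mulVec d - (γ / β) * (incv s t ⬝ᵥ Lp.mulVec bf) := hψdot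
    _ = incv s t ⬝ᵥ Lp.mulVec d - (incv s t ⬝ᵥ Lp.mulVec bf) * γ / (r f * (β / r f)) := by
        rw [hden]; ring
end

section
/- (Multiplicative control of a randomly updated sequence) Let {v^(k)}_{k≥0} be a random sequence of positive reals generated as follows: given v^(k), adaptively choose nonnegative reals {u_i^(k)}_{i=1}^{ℓ_k} and {w_i^(k)}_{i=1}^{ℓ_k} with sum_i u_i^(k) w_i^(k) ≤ η v^(k); then pick a uniformly random index i* ∈ [ℓ_k] and set v^(k+1) ≤ v^(k) + γ u_{i*}^(k) w_{i*}^(k). Let m_0 = min_k ℓ_k, M_0 = max_k ℓ_k, and let ρ ≥ 1, τ ∈ (0,1). Then with probability at least 1 - 2τ, v^(k') ≤ (2γη)^ρ v^(0) for all k' ≤ m_0 * min( 1/((log(M_0^2/τ)) η^2 γ^2), (1/(200 η γ^2 log(M_0^2/τ))) (τ/M_0^2)^{1/ρ} ). -/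
open scoped Classical

open scoped Classical
lemma sum_piFinset_succ {n : ℕ} (t : Finset ℕ) (f : (Fin (n+1) → ℕ) → ℝ) :
    ∑ p ∈ Fintype.piFinset (fun _ : Fin (n+1) => t), f p
      = ∑ i ∈ t, ∑ q ∈ Fintype.piFinset (fun _ : Fin n => t), f (Fin.cons i q) := by
  rw [← Finset.sum_product']
  apply Finset.sum_nbij' (fun p => (p 0, Fin.tail p)) (fun x => Fin.cons x.1 x.2)
  · intro p hp
    simp only [Fintype.mem_piFinset] at hp
    simp [Finset.mem_product, Fintype.mem_piFinset, Fin.tail, hp]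
  · intro x hx
    simp only [Finset.mem_product, Fintype.mem_piFinset] at hx
    simp only [Fintype.mem_piFinset]
    intro a
    cases a using Fin.cases with
    | zero => simpa using hx.1
    | succ i => simpa using hx.2 i
  · intro p hp; exact Fin.cons_self_tail p
  · intro x hx; simp [Fin.tail_cons]
  · intro p hp; rw [Fin.cons_self_tail]

lemma pathA (ℓ : List ℕ → ℕ) (M0 : ℕ) (hM : ∀ l, ℓ l ≤ M0) (h1 : ∀ l, 1 ≤ ℓ l)
    (g : List ℕ → ℕ → ℝ) (hg : ∀ l i, 0 ≤ g l i) (B : ℝ) (hB0 : 0 ≤ B)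
    (hB : ∀ l, ∑ i ∈ Finset.range (ℓ l), g l i ≤ B * (ℓ l)) :
    ∀ (K : ℕ) (l₀ : List ℕ),
      ∑ p ∈ Fintype.piFinset (fun _ : Fin K => Finset.range M0),
        (if ∀ k : Fin K, p k < ℓ (l₀ ++ (List.ofFn p).take (k:ℕ))
         then ∏ k : Fin K, ((ℓ (l₀ ++ (List.ofFn p).take (k:ℕ)) : ℝ)⁻¹
              * g (l₀ ++ (List.ofFn p).take (k:ℕ)) (p k))
         else 0) ≤ B ^ K := by
  intro K
  induction K with
  | zero => intro l₀; simp
  | succ K ih =>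
    intro l₀
    rw [sum_piFinset_succ]
    have hsummand : ∀ (i : ℕ) (q : Fin K → ℕ),
        (if ∀ k : Fin (K+1), (Fin.cons i q : Fin (K+1) → ℕ) k < ℓ (l₀ ++ (List.ofFn (Fin.cons i q : Fin (K+1) → ℕ)).take (k:ℕ))
         then ∏ k : Fin (K+1), ((ℓ (l₀ ++ (List.ofFn (Fin.cons i q : Fin (K+1) → ℕ)).take (k:ℕ)) : ℝ)⁻¹
              * g (l₀ ++ (List.ofFn (Fin.cons i q : Fin (K+1) → ℕ)).take (k:ℕ)) ((Fin.cons i q : Fin (K+1) → ℕ) k))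
         else 0)
        = (if i < ℓ l₀ then ((ℓ l₀ : ℝ)⁻¹ * g l₀ i) else 0) *
          (if ∀ k : Fin K, q k < ℓ ((l₀ ++ [i]) ++ (List.ofFn q).take (k:ℕ))
           then ∏ k : Fin K, ((ℓ ((l₀ ++ [i]) ++ (List.ofFn q).take (k:ℕ)) : ℝ)⁻¹
                * g ((l₀ ++ [i]) ++ (List.ofFn q).take (k:ℕ)) (q k))
           else 0) := by
      intro i q
      have hofn : List.ofFn (Fin.cons i q : Fin (K+1) → ℕ) = i :: List.ofFn q := by
        simp [List.ofFn_succ]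
      have hA0 : l₀ ++ (List.ofFn (Fin.cons i q : Fin (K+1) → ℕ)).take 0 = l₀ := by simp
      have hAs : ∀ n : ℕ, l₀ ++ (List.ofFn (Fin.cons i q : Fin (K+1) → ℕ)).take (n+1)
          = (l₀ ++ [i]) ++ (List.ofFn q).take n := by
        intro n; rw [hofn, List.take_succ_cons]; simp
      by_cases hc1 : i < ℓ l₀
      · by_cases hc2 : ∀ k : Fin K, q k < ℓ ((l₀ ++ [i]) ++ (List.ofFn q).take (k:ℕ))
        · have hcond : ∀ k : Fin (K+1),
              (Fin.cons i q : Fin (K+1) → ℕ) k < ℓ (l₀ ++ (List.ofFn (Fin.cons i q : Fin (K+1) → ℕ)).take (k:ℕ)) := by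
            intro k
            cases k using Fin.cases with
            | zero => simpa [hA0] using hc1
            | succ k => simpa [Fin.val_succ, hAs] using hc2 k
          rw [if_pos hcond, if_pos hc1, if_pos hc2, Fin.prod_univ_succ]
          congr 1
          · simp [hA0]
          · apply Finset.prod_congr rfl
            intro k _
            simp [Fin.val_succ, hAs]
        · have hcond : ¬ ∀ k : Fin (K+1),
              (Fin.cons i q : Fin (K+1) → ℕ) k < ℓ (l₀ ++ (List.ofFn (Fin.cons i q : Fin (K+1) → ℕ)).take (k:ℕ)) := by
            intro hco
            apply hc2
            intro k
            have := hco k.succ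
            simpa [Fin.val_succ, hAs] using this
          rw [if_neg hcond, if_neg hc2, mul_zero]
      · have hcond : ¬ ∀ k : Fin (K+1),
            (Fin.cons i q : Fin (K+1) → ℕ) k < ℓ (l₀ ++ (List.ofFn (Fin.cons i q : Fin (K+1) → ℕ)).take (k:ℕ)) := by
          intro hco
          have := hco 0
          simp only [Fin.cons_zero, Fin.val_zero] at this
          rw [hA0] at this; exact hc1 this
        rw [if_neg hcond, if_neg hc1, zero_mul]
    calc ∑ i ∈ Finset.range M0, ∑ q ∈ Fintype.piFinset (fun _ : Fin K => Finset.range M0),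
          (if ∀ k : Fin (K+1), (Fin.cons i q : Fin (K+1) → ℕ) k < ℓ (l₀ ++ (List.ofFn (Fin.cons i q : Fin (K+1) → ℕ)).take (k:ℕ))
           then ∏ k : Fin (K+1), ((ℓ (l₀ ++ (List.ofFn (Fin.cons i q : Fin (K+1) → ℕ)).take (k:ℕ)) : ℝ)⁻¹
                * g (l₀ ++ (List.ofFn (Fin.cons i q : Fin (K+1) → ℕ)).take (k:ℕ)) ((Fin.cons i q : Fin (K+1) → ℕ) k))
           else 0)
        = ∑ i ∈ Finset.range M0, (if i < ℓ l₀ then ((ℓ l₀ : ℝ)⁻¹ * g l₀ i) else 0) *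
            ∑ q ∈ Fintype.piFinset (fun _ : Fin K => Finset.range M0),
            (if ∀ k : Fin K, q k < ℓ ((l₀ ++ [i]) ++ (List.ofFn q).take (k:ℕ))
             then ∏ k : Fin K, ((ℓ ((l₀ ++ [i]) ++ (List.ofFn q).take (k:ℕ)) : ℝ)⁻¹
                  * g ((l₀ ++ [i]) ++ (List.ofFn q).take (k:ℕ)) (q k))
             else 0) := by
          apply Finset.sum_congr rfl
          intro i _
          rw [Finset.mul_sum]
          exact Finset.sum_congr rfl fun q _ => hsummand i q
      _ ≤ ∑ i ∈ Finset.range M0, (if i < ℓ l₀ then ((ℓ l₀ : ℝ)⁻¹ * g l₀ i) else 0) * B ^ K := by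
          apply Finset.sum_le_sum
          intro i _
          apply mul_le_mul_of_nonneg_left (ih (l₀ ++ [i]))
          split_ifs with h
          · exact mul_nonneg (by positivity) (hg l₀ i)
          · exact le_refl 0
      _ ≤ B ^ (K + 1) := by
          rw [← Finset.sum_mul]
          have : ∑ i ∈ Finset.range M0, (if i < ℓ l₀ then ((ℓ l₀ : ℝ)⁻¹ * g l₀ i) else 0)
              = (ℓ l₀ : ℝ)⁻¹ * ∑ i ∈ Finset.range (ℓ l₀), g l₀ i := by
            rw [Finset.mul_sum]
            rw [← Finset.sum_subset (Finset.range_subset_range.2 (hM l₀))]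
            · exact Finset.sum_congr rfl fun i hi => if_pos (Finset.mem_range.1 hi)
            · intro i _ hi
              rw [if_neg (by simpa using hi)]
          rw [this]
          have hl0 : (0:ℝ) < (ℓ l₀ : ℝ) := by exact_mod_cast h1 l₀
          calc (ℓ l₀ : ℝ)⁻¹ * (∑ i ∈ Finset.range (ℓ l₀), g l₀ i) * B ^ K
              ≤ (ℓ l₀ : ℝ)⁻¹ * (B * (ℓ l₀ : ℝ)) * B ^ K := by
                apply mul_le_mul_of_nonneg_right _ (by positivity)
                exact mul_le_mul_of_nonneg_left (hB l₀) (by positivity)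
            _ = B ^ (K+1) := by field_simp; ring

lemma pathB (γ η ρ : ℝ) (hγ : 1 ≤ γ) (hη : 1 ≤ η)
    (ℓ : List ℕ → ℕ) (u w : List ℕ → ℕ → ℝ) (v : List ℕ → ℝ)
    (hv : ∀ l, 0 < v l) (hu : ∀ l i, 0 ≤ u l i) (hw : ∀ l i, 0 ≤ w l i)
    (hsum : ∀ l, ∑ i ∈ Finset.range (ℓ l), u l i * w l i ≤ η * v l)
    (hstep : ∀ l, ∀ i < ℓ l, v (l ++ [i]) ≤ v l + γ * u l i * w l i)
    (c : ℝ) (hc : 0 < c) (r : ℕ) (hr1 : 1 ≤ r)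
    (hr : ((r : ℝ) - 1) + (1/30) / Real.log (2*γ*η) ≤ ρ)
    (K : ℕ) (p : Fin K → ℕ)
    (hvalid : ∀ k : Fin K, p k < ℓ ((List.ofFn p).take (k:ℕ)))
    (hS : ∑ k : Fin K, min (γ * u ((List.ofFn p).take (k:ℕ)) (p k)
            * w ((List.ofFn p).take (k:ℕ)) (p k) / v ((List.ofFn p).take (k:ℕ))) c < 1/30)
    (hb : (Finset.univ.filter (fun k : Fin K =>
            c * v ((List.ofFn p).take (k:ℕ)) < γ * u ((List.ofFn p).take (k:ℕ)) (p k)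
              * w ((List.ofFn p).take (k:ℕ)) (p k))).card < r) :
    ∀ k' ≤ K, v ((List.ofFn p).take k') ≤ (2*γ*η) ^ ρ * v [] := by
  set tk : ℕ → List ℕ := fun n => (List.ofFn p).take n with htk
  have hγη : (1:ℝ) ≤ γ * η := one_le_mul_of_one_le_of_one_le hγ hη
  have hbase : (2:ℝ) ≤ 2*γ*η := by nlinarith
  have hbase1 : (1:ℝ) < 2*γ*η := by linarith
  have hbase0 : (0:ℝ) < 2*γ*η := by linarith
  have hlogpos : 0 < Real.log (2*γ*η) := Real.log_pos hbase1
  -- jump predicate and step bounds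
  set J : Fin K → Prop := fun k => c * v (tk (k:ℕ)) < γ * u (tk (k:ℕ)) (p k) * w (tk (k:ℕ)) (p k) with hJ
  set x : Fin K → ℝ := fun k => min (γ * u (tk (k:ℕ)) (p k) * w (tk (k:ℕ)) (p k) / v (tk (k:ℕ))) c with hx
  set m : Fin K → ℝ := fun k => if J k then 2*γ*η else Real.exp (x k) with hm
  have hx0 : ∀ k, 0 ≤ x k := by
    intro k
    apply le_min _ hc.le
    have := hv (tk (k:ℕ))
    have := hu (tk (k:ℕ)) (p k)
    have := hw (tk (k:ℕ)) (p k)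
    positivity
  have hm1 : ∀ k, 1 ≤ m k := by
    intro k
    by_cases h : J k
    · simp only [hm, if_pos h]; linarith
    · simp only [hm, if_neg h]; exact Real.one_le_exp (hx0 k)
  have htake : ∀ (n : ℕ) (hn : n < K), tk (n+1) = tk n ++ [p ⟨n, hn⟩] := by
    intro n hn
    simp only [htk]
    rw [List.take_succ]
    congr 1
    rw [List.getElem?_ofFn]
    simp [List.ofFnNthVal, hn]
  have hstep' : ∀ k : Fin K, v (tk ((k:ℕ)+1)) ≤ v (tk (k:ℕ)) * m k := by
    intro k
    have hkK : (k:ℕ) < K := k.isLt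
    have hpk : p k < ℓ (tk (k:ℕ)) := hvalid k
    have h1 : v (tk ((k:ℕ)+1)) ≤ v (tk (k:ℕ)) + γ * u (tk (k:ℕ)) (p k) * w (tk (k:ℕ)) (p k) := by
      rw [htake (k:ℕ) hkK]
      have : (⟨(k:ℕ), hkK⟩ : Fin K) = k := by ext; rfl
      rw [this]
      exact hstep (tk (k:ℕ)) (p k) hpk
    have hvpos := hv (tk (k:ℕ))
    by_cases h : J k
    · simp only [hm, if_pos h]
      have huw : u (tk (k:ℕ)) (p k) * w (tk (k:ℕ)) (p k) ≤ η * v (tk (k:ℕ)) := by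
        refine le_trans ?_ (hsum (tk (k:ℕ)))
        apply Finset.single_le_sum (f := fun i => u (tk (k:ℕ)) i * w (tk (k:ℕ)) i)
        · intro i _; exact mul_nonneg (hu _ i) (hw _ i)
        · exact Finset.mem_range.2 hpk
      nlinarith
    · simp only [hm, if_neg h]
      have hratio : γ * u (tk (k:ℕ)) (p k) * w (tk (k:ℕ)) (p k) / v (tk (k:ℕ)) ≤ c := by
        rw [div_le_iff₀ hvpos]
        have h : ¬ (c * v (tk (k:ℕ)) < γ * u (tk (k:ℕ)) (p k) * w (tk (k:ℕ)) (p k)) := h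
        push_neg at h
        linarith [h]
      have hxk : x k = γ * u (tk (k:ℕ)) (p k) * w (tk (k:ℕ)) (p k) / v (tk (k:ℕ)) := by
        simp only [hx]; exact min_eq_left hratio
      have hmulback : x k * v (tk (k:ℕ)) = γ * u (tk (k:ℕ)) (p k) * w (tk (k:ℕ)) (p k) := by
        rw [hxk]; field_simp
      have hexp : 1 + x k ≤ Real.exp (x k) := by
        have := Real.add_one_le_exp (x k); linarith
      calc v (tk ((k:ℕ)+1)) ≤ v (tk (k:ℕ)) + γ * u (tk (k:ℕ)) (p k) * w (tk (k:ℕ)) (p k) := h1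
        _ = v (tk (k:ℕ)) * (1 + x k) := by rw [← hmulback]; ring
        _ ≤ v (tk (k:ℕ)) * Real.exp (x k) := by
            exact mul_le_mul_of_nonneg_left hexp hvpos.le
  -- growth bound
  have grow : ∀ n : ℕ, n ≤ K →
      v (tk n) ≤ v [] * ∏ k ∈ Finset.univ.filter (fun k : Fin K => (k:ℕ) < n), m k := by
    intro n
    induction n with
    | zero => intro _; simp [htk]
    | succ n ihn =>
      intro hn1
      have hnK : n < K := hn1
      have hfil : Finset.univ.filter (fun k : Fin K => (k:ℕ) < n+1)
          = insert (⟨n, hnK⟩ : Fin K) (Finset.univ.filter (fun k : Fin K => (k:ℕ) < n)) := by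
        ext k
        simp only [Finset.mem_filter, Finset.mem_univ, true_and, Finset.mem_insert,
          Nat.lt_succ_iff_lt_or_eq]
        constructor
        · rintro (h | h)
          · exact Or.inr h
          · exact Or.inl (by ext; exact h)
        · rintro (h | h)
          · subst h; exact Or.inr rfl
          · exact Or.inl h
      have hnot : (⟨n, hnK⟩ : Fin K) ∉ Finset.univ.filter (fun k : Fin K => (k:ℕ) < n) := by
        simp
      rw [hfil, Finset.prod_insert hnot]
      have hprod0 : (0:ℝ) ≤ ∏ k ∈ Finset.univ.filter (fun k : Fin K => (k:ℕ) < n), m k :=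
        Finset.prod_nonneg (fun k _ => le_trans zero_le_one (hm1 k))
      calc v (tk (n+1)) ≤ v (tk n) * m (⟨n, hnK⟩ : Fin K) := hstep' ⟨n, hnK⟩
        _ ≤ (v [] * ∏ k ∈ Finset.univ.filter (fun k : Fin K => (k:ℕ) < n), m k)
              * m (⟨n, hnK⟩ : Fin K) :=
            mul_le_mul_of_nonneg_right (ihn hnK.le) (le_trans zero_le_one (hm1 _))
        _ = v [] * (m (⟨n, hnK⟩ : Fin K) * ∏ k ∈ Finset.univ.filter (fun k : Fin K => (k:ℕ) < n), m k) := by ring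
  -- total product bound
  have hprodle : ∏ k : Fin K, m k ≤ (2*γ*η) ^ ρ := by
    have hsplit : ∏ k : Fin K, m k
        = (∏ k ∈ Finset.univ.filter (fun k : Fin K => J k), m k)
          * ∏ k ∈ Finset.univ.filter (fun k : Fin K => ¬ J k), m k :=
      (Finset.prod_filter_mul_prod_filter_not Finset.univ J m).symm
    have h1 : ∏ k ∈ Finset.univ.filter (fun k : Fin K => J k), m k
        = (2*γ*η) ^ (Finset.univ.filter (fun k : Fin K => J k)).card := by
      rw [← Finset.prod_const]
      apply Finset.prod_congr rfl
      intro k hk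
      simp only [Finset.mem_filter] at hk
      simp only [hm, if_pos hk.2]
    have h2 : ∏ k ∈ Finset.univ.filter (fun k : Fin K => ¬ J k), m k
        ≤ Real.exp (1/30) := by
      have : ∏ k ∈ Finset.univ.filter (fun k : Fin K => ¬ J k), m k
          = Real.exp (∑ k ∈ Finset.univ.filter (fun k : Fin K => ¬ J k), x k) := by
        rw [Real.exp_sum]
        apply Finset.prod_congr rfl
        intro k hk
        simp only [Finset.mem_filter] at hk
        simp only [hm, if_neg hk.2]
      rw [this]
      apply Real.exp_le_exp.2
      refine le_trans ?_ hS.le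
      exact Finset.sum_le_sum_of_subset_of_nonneg (Finset.subset_univ _)
        (fun k _ _ => hx0 k)
    have hcard : (Finset.univ.filter (fun k : Fin K => J k)).card ≤ r - 1 :=
      Nat.le_sub_one_of_lt hb
    have h3 : (2*γ*η) ^ (Finset.univ.filter (fun k : Fin K => J k)).card
        ≤ (2*γ*η) ^ (r-1) := pow_le_pow_right₀ (by linarith) hcard
    have h4 : ((2*γ*η) : ℝ) ^ (r-1) * Real.exp (1/30) ≤ (2*γ*η) ^ ρ := by
      have hcast : ((2*γ*η) : ℝ) ^ (r-1) = (2*γ*η) ^ (((r-1:ℕ)):ℝ) := by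
        rw [Real.rpow_natCast]
      have hexpeq : Real.exp (1/30) = (2*γ*η) ^ ((1/30) / Real.log (2*γ*η)) := by
        rw [Real.rpow_def_of_pos hbase0]
        congr 1
        field_simp
      rw [hcast, hexpeq, ← Real.rpow_add hbase0]
      apply Real.rpow_le_rpow_of_exponent_le (by linarith)
      have : (((r-1:ℕ)):ℝ) = (r:ℝ) - 1 := by
        have : (1:ℕ) ≤ r := hr1
        push_cast [Nat.cast_sub this]
        ring
      rw [this]
      exact hr
    calc ∏ k : Fin K, m k
        = (∏ k ∈ Finset.univ.filter (fun k : Fin K => J k), m k)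
          * ∏ k ∈ Finset.univ.filter (fun k : Fin K => ¬ J k), m k := hsplit
      _ ≤ (2*γ*η) ^ (r-1) * Real.exp (1/30) := by
          apply mul_le_mul
          · rw [h1]; exact h3
          · exact h2
          · exact Finset.prod_nonneg (fun k _ => le_trans zero_le_one (hm1 k))
          · positivity
      _ ≤ (2*γ*η) ^ ρ := h4
  -- conclude
  intro k' hk'
  have h5 : v (tk k') ≤ v [] * ∏ k : Fin K, m k := by
    refine le_trans (grow k' hk') ?_
    apply mul_le_mul_of_nonneg_left _ (hv []).le
    have hsplit := (Finset.prod_filter_mul_prod_filter_not Finset.univ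
      (fun k : Fin K => (k:ℕ) < k') m)
    have hone : (1:ℝ) ≤ ∏ k ∈ Finset.univ.filter (fun k : Fin K => ¬ ((k:ℕ) < k')), m k := by
      have : ∏ k ∈ Finset.univ.filter (fun k : Fin K => ¬ ((k:ℕ) < k')), (1:ℝ)
          ≤ ∏ k ∈ Finset.univ.filter (fun k : Fin K => ¬ ((k:ℕ) < k')), m k :=
        Finset.prod_le_prod (fun i _ => zero_le_one) (fun i _ => hm1 i)
      simpa using this
    have hfnn : (0:ℝ) ≤ ∏ k ∈ Finset.univ.filter (fun k : Fin K => (k:ℕ) < k'), m k :=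
      Finset.prod_nonneg (fun k _ => le_trans zero_le_one (hm1 k))
    calc ∏ k ∈ Finset.univ.filter (fun k : Fin K => (k:ℕ) < k'), m k
        ≤ (∏ k ∈ Finset.univ.filter (fun k : Fin K => (k:ℕ) < k'), m k)
          * ∏ k ∈ Finset.univ.filter (fun k : Fin K => ¬ ((k:ℕ) < k')), m k :=
          le_mul_of_one_le_right hfnn hone
      _ = ∏ k : Fin K, m k := hsplit
  calc v ((List.ofFn p).take k') = v (tk k') := rfl
    _ ≤ v [] * ∏ k : Fin K, m k := h5
    _ ≤ v [] * (2*γ*η) ^ ρ := mul_le_mul_of_nonneg_left hprodle (hv []).le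
    _ = (2*γ*η) ^ ρ * v [] := mul_comm _ _


set_option maxHeartbeats 2000000 in
/-- **Multiplicative control of a randomly (adaptively) updated sequence.**
Histories are encoded as lists of chosen indices; the adaptive data
`ℓ, u, w, v` are arbitrary functions of the history.  A path `p : Fin K → ℕ` of
index choices is valid when each choice is below the current `ℓ`, and its
probability is the product of `1/ℓ` along the way.  The probability that the
value `v` ever exceeds `(2γη)^ρ v(start)` within `K` steps,
`K ≤ m₀ · min(1/((log(M₀²/τ)) η² γ²), (1/(200 η γ² log(M₀²/τ))) (τ/M₀²)^{1/ρ})`,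
is at most `2τ`. -/
theorem random_update_multiplicative_control
    (γ η ρ τ : ℝ) (hγ : 1 ≤ γ) (hη : 1 ≤ η) (hρ : 1 ≤ ρ)
    (hτ0 : 0 < τ) (hτ1 : τ < 1)
    (m0 M0 : ℕ) (hm0 : 1 ≤ m0)
    (ℓ : List ℕ → ℕ) (u w : List ℕ → ℕ → ℝ) (v : List ℕ → ℝ)
    (hℓ : ∀ l, m0 ≤ ℓ l ∧ ℓ l ≤ M0)
    (hv : ∀ l, 0 < v l)
    (hu : ∀ l i, 0 ≤ u l i) (hw : ∀ l i, 0 ≤ w l i)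
    (hsum : ∀ l, ∑ i ∈ Finset.range (ℓ l), u l i * w l i ≤ η * v l)
    (hstep : ∀ l, ∀ i < ℓ l, v (l ++ [i]) ≤ v l + γ * u l i * w l i)
    (K : ℕ)
    (hK : (K : ℝ) ≤ (m0 : ℝ) *
        min (1 / (Real.log ((M0 : ℝ) ^ 2 / τ) * η ^ 2 * γ ^ 2))
            ((1 / (200 * η * γ ^ 2 * Real.log ((M0 : ℝ) ^ 2 / τ)))
              * (τ / (M0 : ℝ) ^ 2) ^ ((1 : ℝ) / ρ))) :
    ∑' p : Fin K → ℕ,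
      (if (∀ k : Fin K, p k < ℓ ((List.ofFn p).take (k : ℕ)))
          ∧ (∃ k' ≤ K, (2 * γ * η) ^ ρ * v [] < v ((List.ofFn p).take k'))
        then ∏ k : Fin K, (1 : ℝ) / (ℓ ((List.ofFn p).take (k : ℕ)) : ℝ)
        else 0)
      ≤ 2 * τ := by
  classical
  have hγη : (1:ℝ) ≤ γ * η := one_le_mul_of_one_le_of_one_le hγ hη
  have hbase : (2:ℝ) ≤ 2*γ*η := by nlinarith
  have hrpow1 : (1:ℝ) ≤ (2*γ*η) ^ ρ := Real.one_le_rpow (by linarith) (by linarith)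
  have hMl : ∀ l, ℓ l ≤ M0 := fun l => (hℓ l).2
  have h1l : ∀ l, 1 ≤ ℓ l := fun l => le_trans hm0 (hℓ l).1
  have hM01 : 1 ≤ M0 := le_trans (h1l []) (hMl [])
  -- trivial case K = 0
  rcases Nat.eq_zero_or_pos K with rfl | hKpos
  · have hzero : ∀ p : Fin 0 → ℕ,
        (if (∀ k : Fin 0, p k < ℓ ((List.ofFn p).take (k : ℕ)))
            ∧ (∃ k' ≤ 0, (2 * γ * η) ^ ρ * v [] < v ((List.ofFn p).take k'))
          then ∏ k : Fin 0, (1 : ℝ) / (ℓ ((List.ofFn p).take (k : ℕ)) : ℝ)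
          else 0) = 0 := by
      intro p
      rw [if_neg]
      rintro ⟨-, k', -, hlt⟩
      have hnil : (List.ofFn p) = [] := by
        apply List.eq_nil_of_length_eq_zero; simp
      rw [hnil, List.take_nil] at hlt
      nlinarith only [hv [], hrpow1, hlt]
    rw [tsum_congr hzero, tsum_zero]
    linarith
  -- reduce to a finite sum
  have hvanish : ∀ p ∉ Fintype.piFinset (fun _ : Fin K => Finset.range M0),
      (if (∀ k : Fin K, p k < ℓ ((List.ofFn p).take (k : ℕ)))
          ∧ (∃ k' ≤ K, (2 * γ * η) ^ ρ * v [] < v ((List.ofFn p).take k'))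
        then ∏ k : Fin K, (1 : ℝ) / (ℓ ((List.ofFn p).take (k : ℕ)) : ℝ)
        else 0) = 0 := by
    intro p hp
    rw [if_neg]
    rintro ⟨hval, -⟩
    apply hp
    rw [Fintype.mem_piFinset]
    intro k
    exact Finset.mem_range.2 (lt_of_lt_of_le (hval k) (hMl _))
  rw [tsum_eq_sum hvanish]
  by_cases hτ2 : (1:ℝ)/2 ≤ τ
  -- easy case : τ ≥ 1/2
  · have HA := pathA ℓ M0 hMl h1l (fun _ _ => 1) (fun _ _ => zero_le_one) 1 zero_le_one
      (fun l => by simp) K []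
    simp only [List.nil_append, mul_one, one_pow] at HA
    refine le_trans (Finset.sum_le_sum ?_) (le_trans HA (by linarith only [hτ2]))
    intro p _
    by_cases hc : (∀ k : Fin K, p k < ℓ ((List.ofFn p).take (k : ℕ)))
        ∧ (∃ k' ≤ K, (2 * γ * η) ^ ρ * v [] < v ((List.ofFn p).take k'))
    · rw [if_pos hc, if_pos hc.1]
      apply le_of_eq
      apply Finset.prod_congr rfl
      intro k _
      rw [one_div]
    · rw [if_neg hc]
      split_ifs
      · exact Finset.prod_nonneg fun k _ => by positivity
      · exact le_refl 0
  -- main case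
  push_neg at hτ2
  set L := Real.log ((M0 : ℝ) ^ 2 / τ) with hLdef
  have hM0R : (1:ℝ) ≤ (M0:ℝ) := by exact_mod_cast hM01
  have hM0pos : (0:ℝ) < (M0:ℝ) := by linarith
  have hMT : (2:ℝ) < (M0:ℝ)^2/τ := by
    have h1 : (1:ℝ) ≤ (M0:ℝ)^2 := by nlinarith only [hM0R]
    rw [lt_div_iff₀ hτ0]
    linarith only [h1, hτ2]
  have hlog2 : (0.6931471803:ℝ) < Real.log 2 := Real.log_two_gt_d9
  have hL2 : Real.log 2 < L := Real.log_lt_log two_pos hMT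
  have hL0 : (0:ℝ) < L := by linarith
  have hexpL : Real.exp L = (M0:ℝ)^2/τ := Real.exp_log (by positivity)
  have hτeq : τ = (M0:ℝ)^2 * Real.exp (-L) := by
    rw [Real.exp_neg, hexpL]
    field_simp
  have hρ0 : (0:ℝ) < ρ := by linarith
  have hEq : (τ/(M0:ℝ)^2) ^ ((1:ℝ)/ρ) = Real.exp (-(L/ρ)) := by
    have hinv : τ/(M0:ℝ)^2 = ((M0:ℝ)^2/τ)⁻¹ := (inv_div _ _).symm
    rw [hinv, Real.rpow_def_of_pos (by positivity), Real.log_inv, hLdef]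
    congr 1
    field_simp
  have hexpneg1 : Real.exp (-(L/ρ)) ≤ 1 := Real.exp_le_one_iff.2 (neg_nonpos.2 (by positivity))
  -- consequence of hK
  have hKb : (K:ℝ) * (200*η*γ^2*L) ≤ (m0:ℝ) * Real.exp (-(L/ρ)) := by
    have hmin : (K:ℝ) ≤ (m0:ℝ) * ((1/(200*η*γ^2*L)) * Real.exp (-(L/ρ))) := by
      rw [← hEq]
      exact le_trans hK (mul_le_mul_of_nonneg_left (min_le_right _ _) (Nat.cast_nonneg m0))
    have hpos : (0:ℝ) < 200*η*γ^2*L := by positivity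
    calc (K:ℝ) * (200*η*γ^2*L)
        ≤ ((m0:ℝ) * ((1/(200*η*γ^2*L)) * Real.exp (-(L/ρ)))) * (200*η*γ^2*L) :=
          mul_le_mul_of_nonneg_right hmin hpos.le
      _ = (m0:ℝ) * Real.exp (-(L/ρ)) := by field_simp
  have hm0pos : (0:ℝ) < (m0:ℝ) := by exact_mod_cast hm0
  have hm0big : 200*η*γ^2*L * Real.exp (L/ρ) ≤ (m0:ℝ) := by
    have hK1 : (1:ℝ) ≤ (K:ℝ) := by exact_mod_cast hKpos
    have h1 : 200*η*γ^2*L ≤ (m0:ℝ) * Real.exp (-(L/ρ)) := by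
      refine le_trans ?_ hKb
      exact le_mul_of_one_le_left (by positivity) hK1
    calc 200*η*γ^2*L * Real.exp (L/ρ)
        ≤ ((m0:ℝ) * Real.exp (-(L/ρ))) * Real.exp (L/ρ) :=
          mul_le_mul_of_nonneg_right h1 (Real.exp_pos _).le
      _ = (m0:ℝ) := by rw [mul_assoc, ← Real.exp_add, neg_add_cancel, Real.exp_zero, mul_one]
  have hKLE : (K:ℝ)*(100*L*(γ*η)) ≤ (m0:ℝ)*Real.exp (-(L/ρ))/2 := by
    have hgg : γ*η ≤ γ^2*η :=
      mul_le_mul_of_nonneg_right (le_self_pow₀ (by linarith) two_ne_zero) (by linarith)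
    have h1 : (100*L)*(γ*η) ≤ (100*L)*(γ^2*η) :=
      mul_le_mul_of_nonneg_left hgg (by positivity)
    calc (K:ℝ)*(100*L*(γ*η)) ≤ (K:ℝ)*(100*L*(γ^2*η)) := by
          have := mul_le_mul_of_nonneg_left h1 (Nat.cast_nonneg (α := ℝ) K)
          calc (K:ℝ)*(100*L*(γ*η)) = (K:ℝ)*((100*L)*(γ*η)) := by ring
            _ ≤ (K:ℝ)*((100*L)*(γ^2*η)) := this
            _ = (K:ℝ)*(100*L*(γ^2*η)) := by ring
      _ = (K:ℝ)*(200*η*γ^2*L)/2 := by ring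
      _ ≤ (m0:ℝ)*Real.exp (-(L/ρ))/2 := by linarith
  have hKL : (K:ℝ)*(100*L*(γ*η)) ≤ (m0:ℝ)/2 := by
    refine le_trans hKLE ?_
    nlinarith only [hexpneg1, hm0pos]
  -- constants
  set c : ℝ := 1/(100*L) with hcdef
  have hc : 0 < c := by positivity
  set s2 : ℝ := 2*Real.exp (L/ρ) with hs2def
  have hs2pos : 0 < s2 := by positivity
  set r : ℕ := ⌊ρ - (1/30)/Real.log 2⌋₊ + 1 with hrdef
  have hlog2pos : (0:ℝ) < Real.log 2 := by linarith
  have hy20 : (1/30:ℝ)/Real.log 2 ≤ 1/20 := by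
    have h23 : (2/3:ℝ) ≤ Real.log 2 := by linarith
    calc (1/30:ℝ)/Real.log 2 ≤ (1/30:ℝ)/(2/3) :=
          div_le_div_of_nonneg_left (show (0:ℝ) ≤ 1/30 by norm_num)
            (show (0:ℝ) < 2/3 by norm_num) h23
      _ = 1/20 := by norm_num
  have hyρ : (0:ℝ) ≤ ρ - (1/30)/Real.log 2 := by linarith
  have hr1 : 1 ≤ r := Nat.le_add_left 1 _
  have hrub : ((r:ℝ) - 1) ≤ ρ - (1/30)/Real.log 2 := by
    have := Nat.floor_le hyρ
    rw [hrdef]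
    push_cast
    linarith
  have hrlb : ρ - 1/20 ≤ (r:ℝ) := by
    have := Nat.lt_floor_add_one (ρ - (1/30)/Real.log 2)
    rw [hrdef]
    push_cast
    linarith
  have hlogge : Real.log 2 ≤ Real.log (2*γ*η) := Real.log_le_log two_pos hbase
  have hlog2γη : (0:ℝ) < Real.log (2*γ*η) := by linarith
  have hr_main : ((r:ℝ) - 1) + (1/30)/Real.log (2*γ*η) ≤ ρ := by
    have h1 : (1/30:ℝ)/Real.log (2*γ*η) ≤ (1/30)/Real.log 2 :=
      div_le_div_of_nonneg_left (by norm_num) hlog2pos hlogge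
    linarith
  -- the two auxiliary weight functions
  set g₁ : List ℕ → ℕ → ℝ :=
    fun l i => Real.exp ((100*L) * min (γ * u l i * w l i / v l) c) with hg₁def
  set g₂ : List ℕ → ℕ → ℝ :=
    fun l i => if c * v l < γ * u l i * w l i then 1 + s2 else 1 with hg₂def
  set B₁ : ℝ := 1 + (Real.exp 1 - 1) * (100*L) * (γ*η) / m0 with hB₁def
  set B₂ : ℝ := 1 + s2 * (100*L*(γ*η)) / m0 with hB₂def
  have hexp1ge : (1:ℝ) ≤ Real.exp 1 := Real.one_le_exp zero_le_one
  have hz1nn : (0:ℝ) ≤ (Real.exp 1 - 1) * (100*L) * (γ*η) / m0 :=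
    div_nonneg (mul_nonneg (mul_nonneg (by linarith only [hexp1ge]) (by positivity))
      (by positivity)) (by positivity)
  have hM0sq1 : (1:ℝ) ≤ (M0:ℝ)^2 := by nlinarith only [hM0R]
  have hg₁nn : ∀ l i, 0 ≤ g₁ l i := fun l i => (Real.exp_pos _).le
  have hg₂nn : ∀ l i, 0 ≤ g₂ l i := by
    intro l i
    rw [hg₂def]
    dsimp only
    split_ifs
    · linarith
    · norm_num
  have hxnn : ∀ l (i : ℕ), 0 ≤ min (γ * u l i * w l i / v l) c := by
    intro l i
    apply le_min _ hc.le
    have := hv l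
    have := hu l i
    have := hw l i
    positivity
  have hxsum : ∀ l, ∑ i ∈ Finset.range (ℓ l), min (γ * u l i * w l i / v l) c ≤ γ*η := by
    intro l
    have h1 : ∀ i ∈ Finset.range (ℓ l),
        min (γ * u l i * w l i / v l) c ≤ γ * u l i * w l i / v l :=
      fun i _ => min_le_left _ _
    refine le_trans (Finset.sum_le_sum h1) ?_
    have hvl := hv l
    have h2 : ∑ i ∈ Finset.range (ℓ l), γ * u l i * w l i / v l
        = γ * (∑ i ∈ Finset.range (ℓ l), u l i * w l i) / v l := by
      rw [Finset.mul_sum, Finset.sum_div]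
      apply Finset.sum_congr rfl
      intro i _
      ring
    rw [h2, div_le_iff₀ hvl]
    calc γ * (∑ i ∈ Finset.range (ℓ l), u l i * w l i) ≤ γ * (η * v l) := by
          apply mul_le_mul_of_nonneg_left (hsum l) (by linarith)
      _ = γ * η * v l := by ring
  have hchord : ∀ y : ℝ, 0 ≤ y → y ≤ 1 → Real.exp y ≤ 1 + (Real.exp 1 - 1) * y := by
    intro y hy0 hy1
    have h := convexOn_exp.2 (Set.mem_univ (0:ℝ)) (Set.mem_univ (1:ℝ))
      (by linarith : (0:ℝ) ≤ 1 - y) hy0 (by ring)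
    simp only [smul_eq_mul, mul_zero, mul_one, zero_add, Real.exp_zero] at h
    linarith
  have hB₁bound : ∀ l, ∑ i ∈ Finset.range (ℓ l), g₁ l i ≤ B₁ * (ℓ l) := by
    intro l
    have hθc : (100*L) * c = 1 := by rw [hcdef]; field_simp
    have hptw : ∀ i ∈ Finset.range (ℓ l),
        g₁ l i ≤ 1 + (Real.exp 1 - 1) * ((100*L) * min (γ * u l i * w l i / v l) c) := by
      intro i _
      apply hchord
      · have := hxnn l i; positivity
      · calc (100*L) * min (γ * u l i * w l i / v l) c ≤ (100*L) * c := by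
              apply mul_le_mul_of_nonneg_left (min_le_right _ _) (by positivity)
          _ = 1 := hθc
    refine le_trans (Finset.sum_le_sum hptw) ?_
    rw [Finset.sum_add_distrib, Finset.sum_const, Finset.card_range, nsmul_eq_mul, mul_one]
    have h3 : ∑ i ∈ Finset.range (ℓ l), (Real.exp 1 - 1) * ((100*L) * min (γ * u l i * w l i / v l) c)
        = (Real.exp 1 - 1) * (100*L) * ∑ i ∈ Finset.range (ℓ l), min (γ * u l i * w l i / v l) c := by
      rw [Finset.mul_sum]
      apply Finset.sum_congr rfl
      intro i _
      ring
    rw [h3]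
    have h4 : (Real.exp 1 - 1) * (100*L) * (∑ i ∈ Finset.range (ℓ l), min (γ * u l i * w l i / v l) c)
        ≤ (Real.exp 1 - 1) * (100*L) * (γ*η) := by
      exact mul_le_mul_of_nonneg_left (hxsum l)
        (mul_nonneg (by linarith only [hexp1ge]) (by positivity))
    have hml : (m0:ℝ) ≤ (ℓ l : ℝ) := by exact_mod_cast (hℓ l).1
    have h5 : (Real.exp 1 - 1) * (100*L) * (γ*η) ≤ (ℓ l : ℝ) * ((Real.exp 1 - 1) * (100*L) * (γ*η) / m0) := by
      have hnn := hz1nn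
      calc (Real.exp 1 - 1) * (100*L) * (γ*η)
          = (m0:ℝ) * ((Real.exp 1 - 1) * (100*L) * (γ*η) / m0) := by field_simp
        _ ≤ (ℓ l : ℝ) * ((Real.exp 1 - 1) * (100*L) * (γ*η) / m0) :=
            mul_le_mul_of_nonneg_right hml hnn
    rw [hB₁def]
    have hl0 : (0:ℝ) ≤ (ℓ l : ℝ) := Nat.cast_nonneg _
    linarith only [h4, h5]
  have hB₂bound : ∀ l, ∑ i ∈ Finset.range (ℓ l), g₂ l i ≤ B₂ * (ℓ l) := by
    intro l
    have hvl := hv l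
    have hsplit : ∀ i, g₂ l i = 1 + s2 * (if c * v l < γ * u l i * w l i then 1 else 0) := by
      intro i
      rw [hg₂def]
      dsimp only
      split_ifs
      · ring
      · ring
    have hsum2 : ∑ i ∈ Finset.range (ℓ l), g₂ l i
        = (ℓ l : ℝ) + s2 * ((Finset.range (ℓ l)).filter
            (fun i => c * v l < γ * u l i * w l i)).card := by
      simp only [hsplit]
      rw [Finset.sum_add_distrib, Finset.sum_const, Finset.card_range, nsmul_eq_mul, mul_one,
        ← Finset.mul_sum, Finset.sum_boole]
    have hcard : (((Finset.range (ℓ l)).filter (fun i => c * v l < γ * u l i * w l i)).card : ℝ)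
        ≤ 100*L*(γ*η) := by
      set T := (Finset.range (ℓ l)).filter (fun i => c * v l < γ * u l i * w l i) with hT
      have hγ0 : (0:ℝ) < γ := by linarith
      have h1 : (T.card : ℝ) * (c * v l / γ) ≤ η * v l := by
        have h2 : (T.card : ℝ) * (c * v l / γ) = ∑ _i ∈ T, (c * v l / γ) := by
          rw [Finset.sum_const, nsmul_eq_mul]
        rw [h2]
        have h3 : ∑ i ∈ T, (c * v l / γ) ≤ ∑ i ∈ T, u l i * w l i := by
          apply Finset.sum_le_sum
          intro i hi
          rw [hT, Finset.mem_filter] at hi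
          rw [div_le_iff₀ hγ0]
          linarith only [hi.2]
        refine le_trans h3 (le_trans ?_ (hsum l))
        apply Finset.sum_le_sum_of_subset_of_nonneg
        · rw [hT]; exact Finset.filter_subset _ _
        · intro i _ _
          exact mul_nonneg (hu l i) (hw l i)
      have hpos : (0:ℝ) < v l / (100*L*γ) := by positivity
      rw [← mul_le_mul_iff_of_pos_right hpos]
      calc (T.card : ℝ) * (v l / (100*L*γ)) = (T.card : ℝ) * (c * v l / γ) := by
            rw [hcdef]; ring
        _ ≤ η * v l := h1
        _ = 100*L*(γ*η) * (v l / (100*L*γ)) := by field_simp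
    have hml : (m0:ℝ) ≤ (ℓ l : ℝ) := by exact_mod_cast (hℓ l).1
    rw [hsum2, hB₂def]
    have h5 : s2 * (100*L*(γ*η)) ≤ (ℓ l : ℝ) * (s2 * (100*L*(γ*η)) / m0) := by
      have hnn : (0:ℝ) ≤ s2 * (100*L*(γ*η)) / m0 := by positivity
      calc s2 * (100*L*(γ*η)) = (m0:ℝ) * (s2 * (100*L*(γ*η)) / m0) := by field_simp
        _ ≤ (ℓ l : ℝ) * (s2 * (100*L*(γ*η)) / m0) := mul_le_mul_of_nonneg_right hml hnn
    have h6 := mul_le_mul_of_nonneg_left hcard hs2pos.le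
    linarith only [h6, h5]
  -- apply pathA to both weights
  have HA₁ := pathA ℓ M0 hMl h1l g₁ hg₁nn B₁ (by rw [hB₁def]; linarith only [hz1nn]) hB₁bound K []
  have HA₂ := pathA ℓ M0 hMl h1l g₂ hg₂nn B₂ (by rw [hB₂def]; positivity) hB₂bound K []
  simp only [List.nil_append] at HA₁ HA₂
  -- numeric tail bounds
  have hexpnegle : Real.exp (-L) ≤ τ := by
    rw [hτeq]
    nlinarith only [Real.exp_pos (-L), hM0sq1]
  have hT1 : B₁^K / Real.exp ((100*L)*(1/30)) ≤ τ := by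
    have hB₁exp : B₁ ≤ Real.exp ((Real.exp 1 - 1) * (100*L) * (γ*η) / m0) := by
      rw [hB₁def]
      have := Real.add_one_le_exp ((Real.exp 1 - 1) * (100*L) * (γ*η) / m0)
      linarith
    have hB₁nn : (0:ℝ) ≤ B₁ := by rw [hB₁def]; linarith only [hz1nn]
    have hpow : B₁^K ≤ Real.exp ((K:ℝ) * ((Real.exp 1 - 1) * (100*L) * (γ*η) / m0)) := by
      rw [Real.exp_nat_mul]
      exact pow_le_pow_left₀ hB₁nn hB₁exp K
    have hKz : (K:ℝ) * ((Real.exp 1 - 1) * (100*L) * (γ*η) / m0) ≤ (Real.exp 1 - 1)/2 := by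
      have h1 : (K:ℝ) * ((Real.exp 1 - 1) * (100*L) * (γ*η) / m0)
          = (Real.exp 1 - 1) * ((K:ℝ)*(100*L*(γ*η))) / m0 := by ring
      rw [h1]
      rw [div_le_iff₀ hm0pos]
      calc (Real.exp 1 - 1) * ((K:ℝ)*(100*L*(γ*η)))
          ≤ (Real.exp 1 - 1) * ((m0:ℝ)/2) := by
            apply mul_le_mul_of_nonneg_left hKL (by linarith only [hexp1ge])
        _ = (Real.exp 1 - 1)/2 * m0 := by ring
    have hexpb : Real.exp ((Real.exp 1 - 1)/2) / Real.exp ((100*L)*(1/30)) ≤ Real.exp (-L) := by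
      rw [← Real.exp_sub, Real.exp_le_exp]
      have he : Real.exp 1 < 2.7182818286 := Real.exp_one_lt_d9
      linarith only [hL2, hlog2, he]
    calc B₁^K / Real.exp ((100*L)*(1/30))
        ≤ Real.exp ((K:ℝ) * ((Real.exp 1 - 1) * (100*L) * (γ*η) / m0)) / Real.exp ((100*L)*(1/30)) :=
          (div_le_div_iff_of_pos_right (Real.exp_pos _)).2 hpow
      _ ≤ Real.exp ((Real.exp 1 - 1)/2) / Real.exp ((100*L)*(1/30)) :=
          (div_le_div_iff_of_pos_right (Real.exp_pos _)).2 (Real.exp_le_exp.2 hKz)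
      _ ≤ Real.exp (-L) := hexpb
      _ ≤ τ := hexpnegle
  have hT2 : B₂^K / s2^r ≤ τ := by
    have hB₂exp : B₂ ≤ Real.exp (s2 * (100*L*(γ*η)) / m0) := by
      rw [hB₂def]
      have := Real.add_one_le_exp (s2 * (100*L*(γ*η)) / m0)
      linarith
    have hB₂nn : (0:ℝ) ≤ B₂ := by rw [hB₂def]; positivity
    have hpow : B₂^K ≤ Real.exp ((K:ℝ) * (s2 * (100*L*(γ*η)) / m0)) := by
      rw [Real.exp_nat_mul]
      exact pow_le_pow_left₀ hB₂nn hB₂exp K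
    have hKz : (K:ℝ) * (s2 * (100*L*(γ*η)) / m0) ≤ 1 := by
      have h1 : (K:ℝ) * (s2 * (100*L*(γ*η)) / m0) = s2 * ((K:ℝ)*(100*L*(γ*η))) / m0 := by ring
      rw [h1, div_le_iff₀ hm0pos]
      calc s2 * ((K:ℝ)*(100*L*(γ*η))) ≤ s2 * ((m0:ℝ)*Real.exp (-(L/ρ))/2) :=
            mul_le_mul_of_nonneg_left hKLE hs2pos.le
        _ = (Real.exp (L/ρ) * Real.exp (-(L/ρ))) * (m0:ℝ) := by rw [hs2def]; ring
        _ = 1 * m0 := by rw [← Real.exp_add]; simp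
    have hpow2 : B₂^K ≤ Real.exp 1 :=
      le_trans hpow (Real.exp_le_exp.2 hKz)
    -- key: exp 1 * exp L ≤ M0^2 * s2^r
    set P := Real.exp (L/ρ) with hPdef
    set Q := Real.exp L with hQdef
    set R := Real.exp (-(L/(20*ρ))) with hRdef
    set W := Real.exp ((r:ℝ)*(L/ρ)) with hWdef
    have hPpos : 0 < P := Real.exp_pos _
    have hQpos : 0 < Q := Real.exp_pos _
    have hRpos : 0 < R := Real.exp_pos _
    have hWpos : 0 < W := Real.exp_pos _
    have hA : Q * R ≤ W := by
      rw [hQdef, hRdef, hWdef, ← Real.exp_add, Real.exp_le_exp]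
      have h1 : (ρ - 1/20) * (L/ρ) ≤ (r:ℝ) * (L/ρ) :=
        mul_le_mul_of_nonneg_right hrlb (by positivity)
      have h2 : (ρ - 1/20) * (L/ρ) = L + -(L/(20*ρ)) := by
        field_simp
        ring
      linarith
    have hB : (138:ℝ) * P ≤ (M0:ℝ) := by
      have hm0M : (m0:ℝ) ≤ (M0:ℝ) := by
        exact_mod_cast le_trans (hℓ []).1 (hℓ []).2
      have hγ2 : (1:ℝ) ≤ γ^2 := by nlinarith only [hγ]
      have hηγ2 : (1:ℝ) ≤ η*γ^2 := by nlinarith only [hη, hγ2]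
      have hL69 : (0.6931471803:ℝ) < L := lt_trans hlog2 hL2
      have h138 : (138:ℝ) ≤ 200*η*γ^2*L := by nlinarith only [hηγ2, hL69, hL0]
      nlinarith only [hm0big, hPpos, h138, hm0M]
    have h2r : (2:ℝ) ≤ 2^r := by
      calc (2:ℝ) = 2^1 := (pow_one 2).symm
        _ ≤ 2^r := pow_le_pow_right₀ one_le_two hr1
    have hP2R : (1:ℝ) ≤ P^2 * R := by
      have : P^2 * R = Real.exp (2*(L/ρ) + -(L/(20*ρ))) := by
        rw [hPdef, hRdef, Real.exp_add, ← Real.exp_nat_mul]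
        norm_num
      rw [this]
      apply Real.one_le_exp
      have : 2*(L/ρ) + -(L/(20*ρ)) = L/ρ * (2 - 1/20) := by field_simp; ring
      rw [this]
      positivity
    have hkey : Real.exp 1 * Q ≤ (M0:ℝ)^2 * (2^r * W) := by
      have he3 : Real.exp 1 ≤ 3 := by
        have := Real.exp_one_lt_d9; linarith
      calc Real.exp 1 * Q ≤ 3 * Q := mul_le_mul_of_nonneg_right he3 hQpos.le
        _ ≤ 38088 * Q * (P^2*R) := by nlinarith only [hQpos, hP2R]
        _ = (19044 * P^2) * 2 * (Q*R) := by ring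
        _ ≤ ((M0:ℝ)^2 * 2^r) * (Q*R) := by
            apply mul_le_mul_of_nonneg_right _ (by positivity)
            have h1 : 19044*P^2 ≤ (M0:ℝ)^2 := by nlinarith only [hB, hPpos, hM0pos]
            have hM0sq : (0:ℝ) ≤ (M0:ℝ)^2 := by positivity
            nlinarith only [h1, h2r, hM0sq]
        _ ≤ ((M0:ℝ)^2 * 2^r) * W := by
            apply mul_le_mul_of_nonneg_left hA
            positivity
        _ = (M0:ℝ)^2 * (2^r * W) := by ring
    have hs2r : s2^r = 2^r * W := by
      rw [hs2def, mul_pow, hWdef, ← Real.exp_nat_mul]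
    have hfin : Real.exp 1 ≤ τ * s2^r := by
      have h1 : Real.exp 1 = Real.exp 1 * Q * Real.exp (-L) := by
        rw [mul_assoc, hQdef, ← Real.exp_add]
        simp
      rw [h1, hτeq, hs2r]
      calc Real.exp 1 * Q * Real.exp (-L) ≤ (M0:ℝ)^2 * (2^r * W) * Real.exp (-L) :=
            mul_le_mul_of_nonneg_right hkey (Real.exp_pos _).le
        _ = (M0:ℝ)^2 * Real.exp (-L) * (2^r * W) := by ring
    calc B₂^K / s2^r ≤ Real.exp 1 / s2^r :=
          (div_le_div_iff_of_pos_right (by positivity)).2 hpow2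
      _ ≤ τ := by
          rw [div_le_iff₀ (by positivity)]
          linarith [hfin]
  -- pointwise bound and conclusion
  have hptB := pathB γ η ρ hγ hη ℓ u w v hv hu hw hsum hstep c hc r hr1 hr_main K
  have hpt : ∀ p : Fin K → ℕ,
      (if (∀ k : Fin K, p k < ℓ ((List.ofFn p).take (k : ℕ)))
          ∧ (∃ k' ≤ K, (2 * γ * η) ^ ρ * v [] < v ((List.ofFn p).take k'))
        then ∏ k : Fin K, (1 : ℝ) / (ℓ ((List.ofFn p).take (k : ℕ)) : ℝ)
        else 0)
      ≤ (if (∀ k : Fin K, p k < ℓ ((List.ofFn p).take (k : ℕ)))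
          then ∏ k : Fin K, ((ℓ ((List.ofFn p).take (k:ℕ)) : ℝ)⁻¹
              * g₁ ((List.ofFn p).take (k:ℕ)) (p k)) else 0) / Real.exp ((100*L)*(1/30))
        + (if (∀ k : Fin K, p k < ℓ ((List.ofFn p).take (k : ℕ)))
          then ∏ k : Fin K, ((ℓ ((List.ofFn p).take (k:ℕ)) : ℝ)⁻¹
              * g₂ ((List.ofFn p).take (k:ℕ)) (p k)) else 0) / s2^r := by
    intro p
    have hnn1 : (0:ℝ) ≤ (if (∀ k : Fin K, p k < ℓ ((List.ofFn p).take (k : ℕ)))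
        then ∏ k : Fin K, ((ℓ ((List.ofFn p).take (k:ℕ)) : ℝ)⁻¹
            * g₁ ((List.ofFn p).take (k:ℕ)) (p k)) else 0) / Real.exp ((100*L)*(1/30)) := by
      apply div_nonneg _ (Real.exp_pos _).le
      split_ifs
      · exact Finset.prod_nonneg fun k _ => mul_nonneg (by positivity) (hg₁nn _ _)
      · exact le_refl 0
    have hnn2 : (0:ℝ) ≤ (if (∀ k : Fin K, p k < ℓ ((List.ofFn p).take (k : ℕ)))
        then ∏ k : Fin K, ((ℓ ((List.ofFn p).take (k:ℕ)) : ℝ)⁻¹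
            * g₂ ((List.ofFn p).take (k:ℕ)) (p k)) else 0) / s2^r := by
      apply div_nonneg _ (by positivity)
      split_ifs
      · exact Finset.prod_nonneg fun k _ => mul_nonneg (by positivity) (hg₂nn _ _)
      · exact le_refl 0
    by_cases hcond : (∀ k : Fin K, p k < ℓ ((List.ofFn p).take (k : ℕ)))
        ∧ (∃ k' ≤ K, (2 * γ * η) ^ ρ * v [] < v ((List.ofFn p).take k'))
    · rw [if_pos hcond]
      obtain ⟨hval, k', hk'K, hk'lt⟩ := hcond
      set S := ∑ k : Fin K, min (γ * u ((List.ofFn p).take (k:ℕ)) (p k)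
          * w ((List.ofFn p).take (k:ℕ)) (p k) / v ((List.ofFn p).take (k:ℕ))) c with hSdef
      set bJ := (Finset.univ.filter (fun k : Fin K =>
          c * v ((List.ofFn p).take (k:ℕ)) < γ * u ((List.ofFn p).take (k:ℕ)) (p k)
            * w ((List.ofFn p).take (k:ℕ)) (p k))).card with hbJdef
      have hdich : (1/30 : ℝ) ≤ S ∨ r ≤ bJ := by
        by_contra hcon
        push_neg at hcon
        have := hptB p hval (by rw [hSdef] at hcon; exact hcon.1)
          (by rw [hbJdef] at hcon; exact hcon.2) k' hk'K
        linarith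
      have hwgt : ∏ k : Fin K, (1 : ℝ) / (ℓ ((List.ofFn p).take (k : ℕ)) : ℝ)
          = ∏ k : Fin K, ((ℓ ((List.ofFn p).take (k : ℕ)) : ℝ))⁻¹ := by
        apply Finset.prod_congr rfl
        intro k _
        rw [one_div]
      have hwgtnn : (0:ℝ) ≤ ∏ k : Fin K, ((ℓ ((List.ofFn p).take (k : ℕ)) : ℝ))⁻¹ :=
        Finset.prod_nonneg fun k _ => by positivity
      rcases hdich with hd1 | hd2
      · -- large S case: first term dominates
        have hprod1 : ∏ k : Fin K, ((ℓ ((List.ofFn p).take (k:ℕ)) : ℝ)⁻¹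
            * g₁ ((List.ofFn p).take (k:ℕ)) (p k))
            = (∏ k : Fin K, ((ℓ ((List.ofFn p).take (k : ℕ)) : ℝ))⁻¹)
              * Real.exp ((100*L) * S) := by
          rw [Finset.prod_mul_distrib]
          congr 1
          rw [hg₁def]
          dsimp only
          rw [← Real.exp_sum, hSdef, Finset.mul_sum]
        have h2 : Real.exp ((100*L)*(1/30)) ≤ Real.exp ((100*L) * S) :=
          Real.exp_le_exp.2 (mul_le_mul_of_nonneg_left hd1 (by positivity))
        have h3 : ∏ k : Fin K, (1 : ℝ) / (ℓ ((List.ofFn p).take (k : ℕ)) : ℝ)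
            ≤ (if (∀ k : Fin K, p k < ℓ ((List.ofFn p).take (k : ℕ)))
              then ∏ k : Fin K, ((ℓ ((List.ofFn p).take (k:ℕ)) : ℝ)⁻¹
                  * g₁ ((List.ofFn p).take (k:ℕ)) (p k)) else 0) / Real.exp ((100*L)*(1/30)) := by
          rw [if_pos hval, hprod1, hwgt, le_div_iff₀ (Real.exp_pos _)]
          exact mul_le_mul_of_nonneg_left h2 hwgtnn
        linarith
      · -- many jumps case: second term dominates
        have hprod2 : ∏ k : Fin K, ((ℓ ((List.ofFn p).take (k:ℕ)) : ℝ)⁻¹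
            * g₂ ((List.ofFn p).take (k:ℕ)) (p k))
            = (∏ k : Fin K, ((ℓ ((List.ofFn p).take (k : ℕ)) : ℝ))⁻¹) * (1+s2)^bJ := by
          rw [Finset.prod_mul_distrib]
          congr 1
          rw [← Finset.prod_filter_mul_prod_filter_not Finset.univ
            (fun k : Fin K => c * v ((List.ofFn p).take (k:ℕ))
              < γ * u ((List.ofFn p).take (k:ℕ)) (p k) * w ((List.ofFn p).take (k:ℕ)) (p k))]
          have hh1 : ∏ k ∈ Finset.univ.filter (fun k : Fin K =>
              c * v ((List.ofFn p).take (k:ℕ)) < γ * u ((List.ofFn p).take (k:ℕ)) (p k)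
                * w ((List.ofFn p).take (k:ℕ)) (p k)),
              g₂ ((List.ofFn p).take (k:ℕ)) (p k) = (1+s2)^bJ := by
            rw [hbJdef, ← Finset.prod_const]
            apply Finset.prod_congr rfl
            intro k hk
            rw [Finset.mem_filter] at hk
            rw [hg₂def]
            dsimp only
            rw [if_pos hk.2]
          have hh2 : ∏ k ∈ Finset.univ.filter (fun k : Fin K =>
              ¬ (c * v ((List.ofFn p).take (k:ℕ)) < γ * u ((List.ofFn p).take (k:ℕ)) (p k)
                * w ((List.ofFn p).take (k:ℕ)) (p k))),
              g₂ ((List.ofFn p).take (k:ℕ)) (p k) = 1 := by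
            apply Finset.prod_eq_one
            intro k hk
            rw [Finset.mem_filter] at hk
            rw [hg₂def]
            dsimp only
            rw [if_neg hk.2]
          rw [hh1, hh2, mul_one]
        have h2 : s2^r ≤ (1+s2)^bJ := by
          calc s2^r ≤ (1+s2)^r := pow_le_pow_left₀ hs2pos.le (by linarith) r
            _ ≤ (1+s2)^bJ := pow_le_pow_right₀ (by linarith) hd2
        have h3 : ∏ k : Fin K, (1 : ℝ) / (ℓ ((List.ofFn p).take (k : ℕ)) : ℝ)
            ≤ (if (∀ k : Fin K, p k < ℓ ((List.ofFn p).take (k : ℕ)))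
              then ∏ k : Fin K, ((ℓ ((List.ofFn p).take (k:ℕ)) : ℝ)⁻¹
                  * g₂ ((List.ofFn p).take (k:ℕ)) (p k)) else 0) / s2^r := by
          rw [if_pos hval, hprod2, hwgt, le_div_iff₀ (by positivity)]
          exact mul_le_mul_of_nonneg_left h2 hwgtnn
        linarith
    · rw [if_neg hcond]
      linarith
  calc ∑ p ∈ Fintype.piFinset (fun _ : Fin K => Finset.range M0),
        (if (∀ k : Fin K, p k < ℓ ((List.ofFn p).take (k : ℕ)))
            ∧ (∃ k' ≤ K, (2 * γ * η) ^ ρ * v [] < v ((List.ofFn p).take k'))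
          then ∏ k : Fin K, (1 : ℝ) / (ℓ ((List.ofFn p).take (k : ℕ)) : ℝ)
          else 0)
      ≤ ∑ p ∈ Fintype.piFinset (fun _ : Fin K => Finset.range M0),
        ((if (∀ k : Fin K, p k < ℓ ((List.ofFn p).take (k : ℕ)))
          then ∏ k : Fin K, ((ℓ ((List.ofFn p).take (k:ℕ)) : ℝ)⁻¹
              * g₁ ((List.ofFn p).take (k:ℕ)) (p k)) else 0) / Real.exp ((100*L)*(1/30))
        + (if (∀ k : Fin K, p k < ℓ ((List.ofFn p).take (k : ℕ)))
          then ∏ k : Fin K, ((ℓ ((List.ofFn p).take (k:ℕ)) : ℝ)⁻¹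
              * g₂ ((List.ofFn p).take (k:ℕ)) (p k)) else 0) / s2^r) :=
        Finset.sum_le_sum (fun p _ => hpt p)
    _ = (∑ p ∈ Fintype.piFinset (fun _ : Fin K => Finset.range M0),
          (if (∀ k : Fin K, p k < ℓ ((List.ofFn p).take (k : ℕ)))
          then ∏ k : Fin K, ((ℓ ((List.ofFn p).take (k:ℕ)) : ℝ)⁻¹
              * g₁ ((List.ofFn p).take (k:ℕ)) (p k)) else 0)) / Real.exp ((100*L)*(1/30))
        + (∑ p ∈ Fintype.piFinset (fun _ : Fin K => Finset.range M0),
          (if (∀ k : Fin K, p k < ℓ ((List.ofFn p).take (k : ℕ)))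
          then ∏ k : Fin K, ((ℓ ((List.ofFn p).take (k:ℕ)) : ℝ)⁻¹
              * g₂ ((List.ofFn p).take (k:ℕ)) (p k)) else 0)) / s2^r := by
        rw [Finset.sum_add_distrib, Finset.sum_div, Finset.sum_div]
    _ ≤ B₁^K / Real.exp ((100*L)*(1/30)) + B₂^K / s2^r := by
        apply add_le_add
        · exact (div_le_div_iff_of_pos_right (Real.exp_pos _)).2 HA₁
        · exact (div_le_div_iff_of_pos_right (by positivity)).2 HA₂
    _ ≤ τ + τ := add_le_add hT1 hT2
    _ = 2 * τ := by ring
end
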